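/- Let p be an odd prime, m ≥ 2, and let x_1, ..., x_m be a basis of (Z/pZ)^m. Let B'_m be the multiset consisting of p−2 copies of x_1 together with the elements x_j + a·x_1 for each 2 ≤ j ≤ m and 0 ≤ a ≤ p−1. Then −x_1 ∉ ΣB'_m; in particular #ΣB'_m ≤ p^m − 1. -/

import Mathlib

/-- The sumset ΣA of a multiset A: all sums of submultisets of A (including the empty sum 0). -/
def sumset {G : Type*} [AddCommMonoid G] (A : Multiset G) : Set G :=
  {x | ∃ B ≤ A, B.sum = x}

lemma exists_decomp {ι G : Type*} [DecidableEq ι] [DecidableEq G] (s : Finset ι)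
    (f : ι → Multiset G) (B : Multiset G) (hB : B ≤ ∑ j ∈ s, f j) :
    ∃ g : ι → Multiset G, (∀ j ∈ s, g j ≤ f j) ∧ B = ∑ j ∈ s, g j := by
  induction s using Finset.induction_on generalizing B with
  | empty => exact ⟨fun _ => 0, by simp, by simpa using hB⟩
  | insert a s' ha ih =>
    rw [Finset.sum_insert ha] at hB
    have h1 : B - f a ≤ ∑ j ∈ s', f j := by
      rw [Multiset.sub_le_iff_le_add]
      exact hB.trans (le_of_eq (add_comm _ _))
    obtain ⟨g, hg, hgeq⟩ := ih _ h1
    refine ⟨Function.update (β := fun _ => Multiset G) g a (B ∩ f a), ?_, ?_⟩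
    · intro j hj
      rcases eq_or_ne j a with h | hja
      · rw [h, Function.update_self]; exact Multiset.inter_le_right (s := B) (t := f a)
      · rw [Function.update_of_ne hja]
        exact hg j ((Finset.mem_insert.1 hj).resolve_left hja)
    · rw [Finset.sum_insert ha, Function.update_self]
      have : ∑ j ∈ s', Function.update (β := fun _ => Multiset G) g a (B ∩ f a) j
          = ∑ j ∈ s', g j := by
        apply Finset.sum_congr rfl
        intro j hj
        exact Function.update_of_ne (by rintro rfl; exact ha hj) _ _
      rw [this, ← hgeq]
      ext x
      simp only [Multiset.count_add, Multiset.count_inter, Multiset.count_sub]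
      omega

lemma sum_finset_sum {ι G : Type*} [AddCommMonoid G] (s : Finset ι) (f : ι → Multiset G) :
    (∑ j ∈ s, f j).sum = ∑ j ∈ s, (f j).sum := by
  induction s using Finset.cons_induction with
  | empty => simp
  | cons a s' ha ih => rw [Finset.sum_cons, Finset.sum_cons, Multiset.sum_add, ih]

theorem stmt_16 (p : ℕ) (hp : p.Prime) (hodd : Odd p) (m : ℕ) (hm : 2 ≤ m)
    (b : Module.Basis (Fin m) (ZMod p) (Fin m → ZMod p))
    (B'm : Multiset (Fin m → ZMod p))
    (hB'm : B'm = Multiset.replicate (p - 2) (b ⟨0, by omega⟩) +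
        ∑ j ∈ Finset.univ.erase (⟨0, by omega⟩ : Fin m), ∑ a ∈ Finset.range p,
          ({b j + a • b ⟨0, by omega⟩} : Multiset (Fin m → ZMod p))) :
    -(b ⟨0, by omega⟩) ∉ sumset B'm ∧ (sumset B'm).ncard ≤ p ^ m - 1 := by
  classical
  haveI : Fact p.Prime := ⟨hp⟩
  have hp1 : 1 < p := hp.one_lt
  have hp3 : 3 ≤ p := by
    rcases hodd with ⟨t, ht⟩
    omega
  set i0 : Fin m := ⟨0, by omega⟩ with hi0
  set x1 := b i0 with hx1
  set S : Finset (Fin m) := Finset.univ.erase i0 with hS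
  set M : Fin m → Multiset (Fin m → ZMod p) :=
    fun j => ∑ a ∈ Finset.range p, ({b j + a • x1} : Multiset _) with hMdef
  have hcoord_self : ∀ i, b.coord i x1 = if i = i0 then 1 else 0 := by
    intro i
    rw [hx1, Module.Basis.coord_apply, Module.Basis.repr_self]
    simp [Finsupp.single_apply, eq_comm]
  have hcoord_b : ∀ i j, b.coord i (b j) = if i = j then 1 else 0 := by
    intro i j
    rw [Module.Basis.coord_apply, Module.Basis.repr_self]
    simp [Finsupp.single_apply, eq_comm]
  -- Gauss sum vanishes
  have hgauss : ∑ a ∈ Finset.range p, (a : ZMod p) = 0 := by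
    have h2 : (∑ a ∈ Finset.range p, (a : ZMod p)) * 2 = 0 := by
      have h := Finset.sum_range_id_mul_two p
      have hcast : (((∑ i ∈ Finset.range p, i) * 2 : ℕ) : ZMod p)
          = ((p * (p - 1) : ℕ) : ZMod p) := by exact_mod_cast congrArg _ h
      push_cast at hcast
      rw [hcast]
      simp
    rcases mul_eq_zero.1 h2 with h | h
    · exact h
    · exfalso
      have hdvd : (p : ℕ) ∣ 2 := by
        exact_mod_cast (ZMod.natCast_eq_zero_iff 2 p).1 (by exact_mod_cast h)
      have := Nat.le_of_dvd (by norm_num) hdvd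
      omega
  have hnot : -x1 ∉ sumset B'm := by
    rintro ⟨B, hBle, hBsum⟩
    rw [hB'm] at hBle
    set R := Multiset.replicate (p - 2) x1 with hR
    have hB2 : B - R ≤ ∑ j ∈ S, M j := by
      rw [Multiset.sub_le_iff_le_add]
      exact hBle.trans (le_of_eq (add_comm _ _))
    obtain ⟨g, hg, hgeq⟩ := exists_decomp S M _ hB2
    obtain ⟨k, hk, hB1eq⟩ := Multiset.le_replicate_iff.1 (Multiset.inter_le_right (s := B) (t := R))
    have hBdec : B = Multiset.replicate k x1 + ∑ j ∈ S, g j := by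
      rw [← hB1eq, ← hgeq]
      ext x
      simp only [Multiset.count_add, Multiset.count_inter, Multiset.count_sub]
      omega
    have hmem : ∀ j ∈ S, ∀ x ∈ g j, ∃ a ∈ Finset.range p, x = b j + a • x1 := by
      intro j hj x hx
      have h1 := Multiset.mem_of_le (hg j hj) hx
      rw [hMdef] at h1
      simpa only [Multiset.mem_sum, Multiset.mem_singleton] using h1
    have hsum : B.sum = k • x1 + ∑ j ∈ S, (g j).sum := by
      rw [hBdec, Multiset.sum_add, Multiset.sum_replicate, sum_finset_sum]
    -- coordinate of (g j).sum for i ≠ i0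
    have hcoordsum : ∀ j ∈ S, ∀ i, i ≠ i0 →
        b.coord i ((g j).sum) = if i = j then ((g j).card : ZMod p) else 0 := by
      intro j hj i hi
      rw [map_multiset_sum]
      have hmap : (g j).map (b.coord i) = Multiset.replicate (g j).card
          (if i = j then (1 : ZMod p) else 0) := by
        rw [Multiset.eq_replicate]
        constructor
        · simp
        · intro c hc
          obtain ⟨x, hx, hcx⟩ := Multiset.mem_map.1 hc
          obtain ⟨a, _, rfl⟩ := hmem j hj x hx
          rw [← hcx, map_add, map_nsmul, hcoord_b, hcoord_self, if_neg hi]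
          simp
      rw [hmap, Multiset.sum_replicate]
      split <;> simp
    -- applying coordinate j for j ∈ S : card of g j ≡ 0 mod p
    have hcard0 : ∀ j ∈ S, ((g j).card : ZMod p) = 0 := by
      intro j hj
      have hji0 : j ≠ i0 := Finset.ne_of_mem_erase hj
      have h1 := congrArg (b.coord j) hBsum
      rw [hsum, map_add, map_nsmul, map_sum, map_neg, hcoord_self, if_neg hji0] at h1
      rw [Finset.sum_congr rfl (fun j' hj' => hcoordsum j' hj' j hji0)] at h1
      rw [Finset.sum_ite_eq S j (fun j' => ((g j').card : ZMod p)), if_pos hj] at h1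
      simpa using h1
    -- so g j = 0 or g j = M j, and in both cases coord i0 of sum vanishes
    have hcardM : ∀ j ∈ S, (M j).card = p := by
      intro j hj
      rw [hMdef]
      beta_reduce
      rw [Multiset.card_sum (Finset.range p)]
      simp
    have hcoord0 : ∀ j ∈ S, b.coord i0 ((g j).sum) = 0 := by
      intro j hj
      have hji0 : j ≠ i0 := Finset.ne_of_mem_erase hj
      have hle : (g j).card ≤ p := by
        have := Multiset.card_le_card (hg j hj)
        rwa [hcardM j hj] at this
      have hdvd : (p : ℕ) ∣ (g j).card :=
        (ZMod.natCast_eq_zero_iff _ p).1 (hcard0 j hj)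
      rcases Nat.eq_zero_or_pos (g j).card with h0 | hpos
      · rw [Multiset.card_eq_zero.1 h0]
        simp
      · have hcardp : (g j).card = p := le_antisymm hle (Nat.le_of_dvd hpos hdvd)
        have hgM : g j = M j :=
          Multiset.eq_of_le_of_card_le (hg j hj) (by rw [hcardp, hcardM j hj])
        rw [hgM, hMdef]
        have : (∑ a ∈ Finset.range p, ({b j + a • x1} : Multiset (Fin m → ZMod p))).sum
            = ∑ a ∈ Finset.range p, (b j + a • x1) := by
          rw [sum_finset_sum]
          simp
        rw [this, map_sum]
        have heach : ∀ a ∈ Finset.range p, b.coord i0 (b j + a • x1) = (a : ZMod p) := by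
          intro a _
          rw [map_add, map_nsmul, hcoord_b, if_neg (Ne.symm hji0), hcoord_self, if_pos rfl]
          simp
        rw [Finset.sum_congr rfl heach, hgauss]
    -- apply coordinate i0
    have hfinal := congrArg (b.coord i0) hBsum
    rw [hsum, map_add, map_nsmul, map_sum, map_neg, hcoord_self, if_pos rfl,
      Finset.sum_congr rfl hcoord0, Finset.sum_const_zero, add_zero] at hfinal
    have hk1 : ((k + 1 : ℕ) : ZMod p) = 0 := by
      push_cast
      rw [← sub_neg_eq_add, sub_eq_zero]
      simpa using hfinal
    have hdvd := (ZMod.natCast_eq_zero_iff (k + 1) p).1 hk1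
    have := Nat.le_of_dvd (by omega) hdvd
    omega
  refine ⟨hnot, ?_⟩
  have hsub : sumset B'm ⊆ Set.univ \ {-x1} := by
    intro x hx
    exact ⟨trivial, fun h => hnot (by rwa [Set.mem_singleton_iff.1 h] at hx)⟩
  have h1 : (sumset B'm).ncard ≤ (Set.univ \ {-x1} : Set (Fin m → ZMod p)).ncard :=
    Set.ncard_le_ncard hsub (Set.toFinite _)
  have h2 : (Set.univ \ {-x1} : Set (Fin m → ZMod p)).ncard = p ^ m - 1 := by
    rw [Set.ncard_diff_singleton_of_mem (Set.mem_univ _), Set.ncard_univ]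
    congr 1
    rw [Nat.card_eq_fintype_card]
    simp [ZMod.card]
  omega
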